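/- Let I ⊆ ℝ be an open interval, let γ : I → ℝ² be a C¹ curve parametrized by arc length with unit tangent τ(s) = γ'(s), and let n : I → ℝ² be a differentiable map of unit vectors with τ(s) = (−n₂(s), n₁(s)) and n'(s) = κ(s) τ(s) for a function κ : I → ℝ. Let v : ℝ² → ℝ² be C¹ with v(γ(s)) · n(s) = 0 for all s ∈ I. Then for each s ∈ I, the Navier boundary condition with α = 2κ, namely 2 (D(v)(γ(s)) n(s)) · τ(s) + 2κ(s) (v(γ(s)) · τ(s)) = 0, holds if and only if the Lions boundary condition ω(v)(γ(s)) = 0 holds. -/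

import Mathlib

noncomputable section

/-- Dot product on `ℝ²` (realized as `Fin 2 → ℝ`). -/
def dot2 (u w : Fin 2 → ℝ) : ℝ := u 0 * w 0 + u 1 * w 1

/-- Vorticity `ω(v)(x) = ∂₁v²(x) − ∂₂v¹(x)` (components indexed `0,1`). -/
def vort (v : (Fin 2 → ℝ) → Fin 2 → ℝ) (x : Fin 2 → ℝ) : ℝ :=
  fderiv ℝ v x (Pi.single 0 1) 1 - fderiv ℝ v x (Pi.single 1 1) 0

/-- Rate-of-strain tensor `D(v)(x) = ½(Dv(x) + Dv(x)ᵀ)`, acting on a vector `u`. -/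
def strain (v : (Fin 2 → ℝ) → Fin 2 → ℝ) (x u : Fin 2 → ℝ) : Fin 2 → ℝ :=
  fun i => (1 / 2) * (fderiv ℝ v x u i + dot2 (fun j => fderiv ℝ v x (Pi.single i 1) j) u)

/-- Express a continuous linear map on `ℝ²` in the standard basis. -/
lemma clm_split (L : (Fin 2 → ℝ) →L[ℝ] (Fin 2 → ℝ)) (u : Fin 2 → ℝ) (i : Fin 2) :
    L u i = u 0 * L (Pi.single 0 1) i + u 1 * L (Pi.single 1 1) i := by
  have hu : u = u 0 • (Pi.single 0 1 : Fin 2 → ℝ) + u 1 • (Pi.single 1 1 : Fin 2 → ℝ) := by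
    funext j; fin_cases j <;> simp
  conv_lhs => rw [hu]
  simp [Pi.add_apply, smul_eq_mul]

/-- Along a `C¹` arc-length curve `γ` in the open interval `(a,b)`, with unit normal `n`,
positively-oriented tangent `τ = (−n₂, n₁) = γ'` and `n' = κ τ`, for a `C¹` vector field `v`
tangent to the curve, the Navier boundary condition with `α = 2κ`, namely
`2 (D(v) n) ⬝ τ + 2κ (v ⬝ τ) = 0`, holds at `γ(s)` iff the Lions condition `ω(v)(γ(s)) = 0` holds. -/
theorem navier_two_kappa_iff_lions (a b : ℝ) (γ τ n : ℝ → Fin 2 → ℝ) (κ : ℝ → ℝ)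
    (v : (Fin 2 → ℝ) → Fin 2 → ℝ)
    (hγ : ∀ s ∈ Set.Ioo a b, HasDerivAt γ (τ s) s)
    (hτcont : ContinuousOn τ (Set.Ioo a b))
    (hτunit : ∀ s ∈ Set.Ioo a b, dot2 (τ s) (τ s) = 1)
    (hnunit : ∀ s ∈ Set.Ioo a b, dot2 (n s) (n s) = 1)
    (hτdef : ∀ s ∈ Set.Ioo a b, τ s = ![-(n s 1), n s 0])
    (hn' : ∀ s ∈ Set.Ioo a b, HasDerivAt n (κ s • τ s) s)
    (hv : ContDiff ℝ 1 v)
    (htang : ∀ s ∈ Set.Ioo a b, dot2 (v (γ s)) (n s) = 0) :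
    ∀ s ∈ Set.Ioo a b,
      (2 * dot2 (strain v (γ s) (n s)) (τ s) + 2 * κ s * dot2 (v (γ s)) (τ s) = 0 ↔
        vort v (γ s) = 0) := by
  intro s hs
  have hLd : HasFDerivAt v (fderiv ℝ v (γ s)) (γ s) :=
    (hv.differentiable one_ne_zero (γ s)).hasFDerivAt
  set L := fderiv ℝ v (γ s) with hLdef
  have hcomp : HasDerivAt (fun t => v (γ t)) (L (τ s)) s :=
    hLd.comp_hasDerivAt s (hγ s hs)
  have hvc : ∀ i : Fin 2, HasDerivAt (fun t => v (γ t) i) (L (τ s) i) s := fun i =>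
    (ContinuousLinearMap.proj (R := ℝ) (φ := fun _ : Fin 2 => ℝ) i).hasFDerivAt.comp_hasDerivAt s hcomp
  have hnc : ∀ i : Fin 2, HasDerivAt (fun t => n t i) ((κ s • τ s) i) s := fun i =>
    (ContinuousLinearMap.proj (R := ℝ) (φ := fun _ : Fin 2 => ℝ) i).hasFDerivAt.comp_hasDerivAt s (hn' s hs)
  have hf : HasDerivAt (fun t => dot2 (v (γ t)) (n t))
      (L (τ s) 0 * n s 0 + v (γ s) 0 * (κ s • τ s) 0
        + (L (τ s) 1 * n s 1 + v (γ s) 1 * (κ s • τ s) 1)) s :=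
    ((hvc 0).mul (hnc 0)).add ((hvc 1).mul (hnc 1))
  have hzero : HasDerivAt (fun t => dot2 (v (γ t)) (n t)) 0 s := by
    have hev : (fun t => dot2 (v (γ t)) (n t)) =ᶠ[nhds s] fun _ => (0 : ℝ) := by
      filter_upwards [isOpen_Ioo.mem_nhds hs] with t ht using htang t ht
    exact (hasDerivAt_const s (0:ℝ)).congr_of_eventuallyEq hev
  have hE : L (τ s) 0 * n s 0 + v (γ s) 0 * (κ s • τ s) 0
      + (L (τ s) 1 * n s 1 + v (γ s) 1 * (κ s • τ s) 1) = 0 := hf.unique hzero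
  have hunit : n s 0 * n s 0 + n s 1 * n s 1 = 1 := hnunit s hs
  have hτ0 : τ s 0 = -(n s 1) := by rw [hτdef s hs]; simp
  have hτ1 : τ s 1 = n s 0 := by rw [hτdef s hs]; simp
  have hL : ∀ (u : Fin 2 → ℝ) (i : Fin 2),
      L u i = u 0 * L (Pi.single 0 1) i + u 1 * L (Pi.single 1 1) i := clm_split L
  rw [hL (τ s) 0, hL (τ s) 1, Pi.smul_apply, Pi.smul_apply, smul_eq_mul, smul_eq_mul,
    hτ0, hτ1] at hE
  simp only [strain, vort, dot2, ← hLdef]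
  rw [hL (n s) 0, hL (n s) 1, hτ0, hτ1]
  constructor <;> intro h
  · linear_combination h - 2 * hE - (L (Pi.single 0 1) 1 - L (Pi.single 1 1) 0) * hunit
  · linear_combination h + 2 * hE + (L (Pi.single 0 1) 1 - L (Pi.single 1 1) 0) * hunit

end
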